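/- arXiv:1712.01595 — 2 statements merged into one kernel-verified Lean document; each statement's English description precedes it below -/
import Mathlib

section
/- Let Ω ⊂ ℝ² be an open bounded set and let P₁, P₂ ∈ L^∞(Ω), extended by zero outside Ω. Define T̃₁₁(x,y) = −∫₀^x P₁(ξ,y) dξ, T̃₂₂(x,y) = −∫₀^y P₂(x,ξ) dξ, and T̃₁₂ = T̃₂₁ = 0 on Ω. Then T̃ = {T̃_{αβ}} is a symmetric, essentially bounded matrix field on Ω satisfying the distributional divergence identity T̃_{αβ,β} = −P_α in Ω (α ∈ {1,2}), and there exists C > 0 such that T_{αβ} := T̃_{αβ} + C δ_{αβ} is uniformly positive definite almost everywhere in Ω while still satisfying T_{αβ,β} = −P_α in Ω, where δ_{αβ} is the Kronecker delta. -/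
open MeasureTheory Filter Topology

noncomputable section

/-- The two coordinate directions in `ℝ²`. -/
def dir : Fin 2 → ℝ × ℝ := ![(1, 0), (0, 1)]

/-- Partial derivative of `f` in the `i`-th coordinate direction. -/
def pd (f : ℝ × ℝ → ℝ) (i : Fin 2) (x : ℝ × ℝ) : ℝ :=
  fderiv ℝ f x (dir i)

/-- Second partial derivative `f_{,ij}`. -/
def pd2 (f : ℝ × ℝ → ℝ) (i j : Fin 2) (x : ℝ × ℝ) : ℝ :=
  pd (fun y => pd f i y) j x

/-- A plate displacement field `u = (u₁,u₂,w)`. -/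
abbrev Config : Type := (Fin 2 → ℝ × ℝ → ℝ) × (ℝ × ℝ → ℝ)

/-- Membrane strain tensor `γ_{αβ}(u) = (u_{α,β}+u_{β,α})/2 + w_{,α} w_{,β}/2`. -/
def gam (u : Config) (α β : Fin 2) (x : ℝ × ℝ) : ℝ :=
  (pd (u.1 α) β x + pd (u.1 β) α x) / 2 + pd u.2 α x * pd u.2 β x / 2

/-- Curvature-change tensor `κ_{αβ}(u) = -w_{,αβ}`. -/
def kap (u : Config) (α β : Fin 2) (x : ℝ × ℝ) : ℝ := - pd2 u.2 α β x

/-- A constant fourth-order tensor on `ℝ²`. -/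
abbrev Tensor4 := Fin 2 → Fin 2 → Fin 2 → Fin 2 → ℝ

/-- `H` is symmetric and positive definite as a fourth order tensor. -/
def SymPosDef (H : Tensor4) : Prop :=
  (∀ α β l m, H α β l m = H β α l m ∧ H α β l m = H l m α β) ∧
  ∃ c > 0, ∀ t : Fin 2 → Fin 2 → ℝ,
    c * (∑ α, ∑ β, (t α β) ^ 2) ≤ ∑ α, ∑ β, ∑ l, ∑ m, H α β l m * t α β * t l m

/-- Membrane energy `G₁(γ(u)) = (1/2)∫_Ω H_{αβλμ} γ_{αβ}(u) γ_{λμ}(u) dx`. -/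
def G1 (H : Tensor4) (Ω : Set (ℝ × ℝ)) (u : Config) : ℝ :=
  (1 / 2) * ∫ x in Ω, ∑ α, ∑ β, ∑ l, ∑ m, H α β l m * gam u α β x * gam u l m x

/-- Bending energy `G₂(κ(u)) = (1/2)∫_Ω h_{αβλμ} κ_{αβ}(u) κ_{λμ}(u) dx`. -/
def G2 (ht : Tensor4) (Ω : Set (ℝ × ℝ)) (u : Config) : ℝ :=
  (1 / 2) * ∫ x in Ω, ∑ α, ∑ β, ∑ l, ∑ m, ht α β l m * kap u α β x * kap u l m x

/-- Admissible displacements for the clamped plate: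
`U = W₀^{1,2}(Ω;ℝ²) × W₀^{2,2}(Ω)`, i.e. `u_α = w = ∂w/∂n = 0` on `∂Ω`. -/
def Uad (Ω : Set (ℝ × ℝ)) : Set Config :=
  {u | (∀ α, ContDiff ℝ 1 (u.1 α)) ∧ ContDiff ℝ 2 u.2 ∧
       (∀ α, ∀ x ∈ frontier Ω, u.1 α x = 0) ∧
       (∀ x ∈ frontier Ω, u.2 x = 0) ∧
       (∀ x ∈ frontier Ω, fderiv ℝ u.2 x = 0)}

/-- The total potential energy
`J(u) = G₁(γ(u)) + G₂(κ(u)) - ⟨w,P⟩_{L²} - ⟨u_α,P_α⟩_{L²}`. -/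
def Jfun (H ht : Tensor4) (Ω : Set (ℝ × ℝ)) (P : Fin 2 → ℝ × ℝ → ℝ) (P3 : ℝ × ℝ → ℝ)
    (u : Config) : ℝ :=
  G1 H Ω u + G2 ht Ω u - (∫ x in Ω, u.2 x * P3 x) - ∑ α, ∫ x in Ω, u.1 α x * P α x

/-- `φ` is a smooth test function compactly supported in `Ω`. -/
def TestFun (Ω : Set (ℝ × ℝ)) (φ : ℝ × ℝ → ℝ) : Prop :=
  ContDiff ℝ (⊤ : ℕ∞) φ ∧ HasCompactSupport φ ∧ tsupport φ ⊆ Ω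

/-- Membership in `L²(Ω;ℝ²)`. -/
def L2vec (Ω : Set (ℝ × ℝ)) (z : Fin 2 → ℝ × ℝ → ℝ) : Prop :=
  ∀ α, MemLp (z α) 2 (volume.restrict Ω)

/-- Membership in `L²(Ω;ℝ^{2×2})`. -/
def L2mat (Ω : Set (ℝ × ℝ)) (N : Fin 2 → Fin 2 → ℝ × ℝ → ℝ) : Prop :=
  ∀ α β, MemLp (N α β) 2 (volume.restrict Ω)

section AuxLemmas
open Set

lemma slice1_hasDerivAt {φ : ℝ × ℝ → ℝ} (hφ : ContDiff ℝ 1 φ) (x y : ℝ) :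
    HasDerivAt (fun t => φ (t, y)) (pd φ 0 (x, y)) x := by
  have h1 : HasDerivAt (fun t : ℝ => (t, y)) ((1 : ℝ), (0 : ℝ)) x :=
    (hasDerivAt_id x).prodMk (hasDerivAt_const x y)
  have h2 := (hφ.differentiable one_ne_zero (x, y)).hasFDerivAt
  have h3 := h2.comp_hasDerivAt x h1
  have : dir 0 = ((1 : ℝ), (0 : ℝ)) := by simp [dir]
  simp only [pd, this]
  exact h3

lemma slice2_hasDerivAt {φ : ℝ × ℝ → ℝ} (hφ : ContDiff ℝ 1 φ) (x y : ℝ) :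
    HasDerivAt (fun t => φ (x, t)) (pd φ 1 (x, y)) y := by
  have h1 : HasDerivAt (fun t : ℝ => (x, t)) ((0 : ℝ), (1 : ℝ)) y :=
    (hasDerivAt_const y x).prodMk (hasDerivAt_id y)
  have h2 := (hφ.differentiable one_ne_zero (x, y)).hasFDerivAt
  have h3 := h2.comp_hasDerivAt y h1
  have : dir 1 = ((0 : ℝ), (1 : ℝ)) := by simp [dir]
  simp only [pd, this]
  exact h3

lemma slice1_contDiff {φ : ℝ × ℝ → ℝ} (hφ : ContDiff ℝ 1 φ) (y : ℝ) :
    ContDiff ℝ 1 (fun t => φ (t, y)) := hφ.comp (contDiff_id.prodMk contDiff_const)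

lemma slice2_contDiff {φ : ℝ × ℝ → ℝ} (hφ : ContDiff ℝ 1 φ) (x : ℝ) :
    ContDiff ℝ 1 (fun t => φ (x, t)) := hφ.comp (contDiff_const.prodMk contDiff_id)

lemma slice1_compactSupport {φ : ℝ × ℝ → ℝ} (h : HasCompactSupport φ) (y : ℝ) :
    HasCompactSupport (fun t => φ (t, y)) := by
  apply HasCompactSupport.intro (IsCompact.image h continuous_fst)
  intro t ht
  by_contra hc
  exact ht ⟨(t, y), subset_tsupport _ hc, rfl⟩

lemma slice2_compactSupport {φ : ℝ × ℝ → ℝ} (h : HasCompactSupport φ) (x : ℝ) :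
    HasCompactSupport (fun t => φ (x, t)) := by
  apply HasCompactSupport.intro (IsCompact.image h continuous_snd)
  intro t ht
  by_contra hc
  exact ht ⟨(x, t), subset_tsupport _ hc, rfl⟩

lemma pd_eq_zero_of_nmem {φ : ℝ × ℝ → ℝ} {x : ℝ × ℝ} (hx : x ∉ tsupport φ) (i : Fin 2) :
    pd φ i x = 0 := by
  have : fderiv ℝ φ x = 0 := by
    by_contra hc
    exact hx (support_fderiv_subset ℝ (by simpa [Function.mem_support] using hc))
  simp [pd, this]

lemma pd_continuous {φ : ℝ × ℝ → ℝ} (hφ : ContDiff ℝ (⊤ : ℕ∞) φ) (i : Fin 2) :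
    Continuous (pd φ i) :=
  (hφ.continuous_fderiv (by norm_num)).clm_apply continuous_const

lemma key1d (g : ℝ → ℝ) (hg : AEStronglyMeasurable g volume) (M : ℝ)
    (hM : ∀ᵐ ξ : ℝ ∂volume, ‖g ξ‖ ≤ M)
    (φ : ℝ → ℝ) (hφ : ContDiff ℝ 1 φ) (hcs : HasCompactSupport φ) :
    ∫ x : ℝ, (∫ ξ in (0:ℝ)..x, g ξ) * deriv φ x = -∫ ξ : ℝ, g ξ * φ ξ := by
  set ψ : ℝ → ℝ := deriv φ with hψdef
  have hψc : Continuous ψ := hφ.continuous_deriv le_rfl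
  have hψcs : HasCompactSupport ψ := hcs.deriv
  obtain ⟨Cψ, hCψ⟩ : ∃ C, ∀ x, ‖ψ x‖ ≤ C := hψcs.exists_bound_of_continuous hψc
  have hCψ0 : 0 ≤ Cψ := le_trans (norm_nonneg _) (hCψ 0)
  obtain ⟨R₀, hR₀⟩ := hψcs.isBounded.subset_closedBall 0
  set R := max R₀ 0 with hRdef
  have hR0 : 0 ≤ R := le_max_right _ _
  have hR : tsupport ψ ⊆ Icc (-R) R := by
    intro x hx
    have h1 := hR₀ hx
    simp only [Metric.mem_closedBall, Real.dist_eq, sub_zero] at h1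
    exact abs_le.1 (h1.trans (le_max_left _ _))
  set S1 : Set (ℝ × ℝ) := {z | 0 < z.2 ∧ z.2 ≤ z.1} with hS1def
  set S2 : Set (ℝ × ℝ) := {z | z.1 < z.2 ∧ z.2 ≤ 0} with hS2def
  have hS1m : MeasurableSet S1 :=
    (measurableSet_lt measurable_const measurable_snd).inter
      (measurableSet_le measurable_snd measurable_fst)
  have hS2m : MeasurableSet S2 :=
    (measurableSet_lt measurable_fst measurable_snd).inter
      (measurableSet_le measurable_snd measurable_const)
  set d : ℝ × ℝ → ℝ := fun z =>
    S1.indicator (fun _ => (1:ℝ)) z - S2.indicator (fun _ => (1:ℝ)) z with hddef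
  have hdabs : ∀ z, |d z| ≤ 1 := by
    intro z
    simp only [hddef, indicator_apply]
    by_cases h1 : z ∈ S1 <;> by_cases h2 : z ∈ S2 <;> simp [h1, h2]
  have hdsupp : ∀ z, d z ≠ 0 → z ∈ S1 ∪ S2 := by
    intro z hz
    by_contra hc
    simp only [mem_union, not_or] at hc
    simp [hddef, indicator_of_notMem hc.1, indicator_of_notMem hc.2] at hz
  set h : ℝ × ℝ → ℝ := fun z => d z * (g z.2 * ψ z.1) with hhdef
  have hgint : ∀ a b : ℝ, IntegrableOn g (Ioc a b) := by
    intro a b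
    exact Integrable.mono' (integrable_const M) hg.restrict (ae_restrict_of_ae hM)
  -- step 1 : inner representation
  have step1 : ∀ x : ℝ, ∫ ξ : ℝ, h (x, ξ) = (∫ ξ in (0:ℝ)..x, g ξ) * ψ x := by
    intro x
    have e1 : (fun ξ : ℝ => h (x, ξ)) = fun ξ =>
        ((Ioc (0:ℝ) x).indicator g ξ - (Ioc x (0:ℝ)).indicator g ξ) * ψ x := by
      funext ξ
      simp only [hhdef, hddef, indicator_apply, hS1def, hS2def, mem_setOf_eq, mem_Ioc]
      by_cases h1 : 0 < ξ ∧ ξ ≤ x <;> by_cases h2 : x < ξ ∧ ξ ≤ 0 <;>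
        simp [h1, h2] <;> ring
    rw [e1, integral_mul_const]
    congr 1
    rw [integral_sub ((integrable_indicator_iff measurableSet_Ioc).2 (hgint 0 x))
      ((integrable_indicator_iff measurableSet_Ioc).2 (hgint x 0)),
      integral_indicator measurableSet_Ioc, integral_indicator measurableSet_Ioc]
    rfl
  -- integrability of h on the product
  have hbound : Integrable (fun z : ℝ × ℝ =>
      (Icc (-R) R ×ˢ Icc (-R) R).indicator (fun _ => (max M 0) * Cψ) z)
      ((volume : Measure ℝ).prod volume) := by
    apply (integrable_indicator_iff (measurableSet_Icc.prod measurableSet_Icc)).2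
    refine integrableOn_const (hs := ?_)
    rw [Measure.prod_prod]
    exact (ENNReal.mul_lt_top (by simp [Real.volume_Icc]) (by simp [Real.volume_Icc])).ne
  have hhaesm : AEStronglyMeasurable h ((volume : Measure ℝ).prod volume) := by
    apply AEStronglyMeasurable.mul
    · exact ((stronglyMeasurable_const.indicator hS1m).sub
        (stronglyMeasurable_const.indicator hS2m)).aestronglyMeasurable
    · exact (hg.comp_quasiMeasurePreserving Measure.quasiMeasurePreserving_snd).mul
        (hψc.comp continuous_fst).aestronglyMeasurable
  have hMae : ∀ᵐ z : ℝ × ℝ ∂((volume : Measure ℝ).prod volume), ‖g z.2‖ ≤ M :=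
    Measure.quasiMeasurePreserving_snd.ae hM
  have hhint : Integrable h ((volume : Measure ℝ).prod volume) := by
    refine Integrable.mono' hbound hhaesm ?_
    filter_upwards [hMae] with z hz
    by_cases hd0 : d z = 0
    · simp [hhdef, hd0, indicator_apply]
      positivity
    by_cases hψ0 : ψ z.1 = 0
    · simp [hhdef, hψ0, indicator_apply]
      positivity
    have hz1 : z.1 ∈ Icc (-R) R := hR (subset_tsupport ψ hψ0)
    have hz2 : z.2 ∈ Icc (-R) R := by
      rcases hdsupp z hd0 with h1 | h1 <;>
        simp only [hS1def, hS2def, mem_setOf_eq] at h1 <;> constructor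
      · linarith
      · exact h1.2.trans hz1.2
      · linarith [hz1.1]
      · linarith
    rw [indicator_of_mem (mk_mem_prod hz1 hz2)]
    calc ‖h z‖ = |d z| * (‖g z.2‖ * ‖ψ z.1‖) := by
          simp [hhdef, abs_mul]
      _ ≤ 1 * (max M 0 * Cψ) := by
          apply mul_le_mul (hdabs z) ?_ (by positivity) zero_le_one
          exact mul_le_mul (hz.trans (le_max_left _ _)) (hCψ _) (norm_nonneg _)
            (le_max_right _ _)
      _ = max M 0 * Cψ := one_mul _
  -- step 3 : evaluation of the x-integral for fixed ξ ≠ 0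
  have hne : ∀ᵐ ξ : ℝ ∂volume, ξ ≠ 0 := by
    refine ae_iff.2 ?_
    have : {ξ : ℝ | ¬ ξ ≠ 0} = {0} := by ext ξ; simp
    rw [this]
    exact Real.volume_singleton
  have step3 : ∀ᵐ ξ : ℝ ∂volume, ∫ x : ℝ, h (x, ξ) = -(g ξ * φ ξ) := by
    filter_upwards [hne] with ξ hξ
    rcases lt_or_gt_of_ne hξ with hneg | hpos
    · have e : (fun x : ℝ => h (x, ξ)) = fun x => -((Iio ξ).indicator (fun x => g ξ * ψ x) x) := by
        funext x
        simp only [hhdef, hddef, indicator_apply, hS1def, hS2def, mem_setOf_eq, mem_Iio]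
        by_cases h2 : x < ξ
        · simp [h2, not_lt.2 hneg.le, hneg.le, (by linarith : ¬ (0:ℝ) < ξ)]
        · simp [h2, (by linarith : ¬ (0:ℝ) < ξ)]
      rw [e, integral_neg, integral_indicator measurableSet_Iio, integral_const_mul,
        ← integral_Iic_eq_integral_Iio, hψdef, HasCompactSupport.integral_Iic_deriv_eq hφ hcs ξ]
    · have e : (fun x : ℝ => h (x, ξ)) = fun x => (Ici ξ).indicator (fun x => g ξ * ψ x) x := by
        funext x
        simp only [hhdef, hddef, indicator_apply, hS1def, hS2def, mem_setOf_eq, mem_Ici]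
        by_cases h2 : ξ ≤ x
        · simp [h2, hpos, (by linarith : ¬ ξ ≤ (0:ℝ))]
        · simp [h2, (by linarith : ¬ ξ ≤ (0:ℝ)), fun hh : x < ξ => (by linarith : ¬ ξ ≤ x)]
      rw [e, integral_indicator measurableSet_Ici, integral_const_mul,
        integral_Ici_eq_integral_Ioi, hψdef, HasCompactSupport.integral_Ioi_deriv_eq hφ hcs ξ]
      ring
  -- assemble
  calc ∫ x : ℝ, (∫ ξ in (0:ℝ)..x, g ξ) * ψ x
      = ∫ x : ℝ, ∫ ξ : ℝ, h (x, ξ) := by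
        exact (integral_congr_ae (Eventually.of_forall step1)).symm
    _ = ∫ ξ : ℝ, ∫ x : ℝ, h (x, ξ) := integral_integral_swap hhint
    _ = ∫ ξ : ℝ, -(g ξ * φ ξ) := integral_congr_ae step3
    _ = -∫ ξ : ℝ, g ξ * φ ξ := integral_neg _

lemma ae_slice_fst {Q : ℝ → ℝ → Prop} (h : ∀ᵐ z : ℝ × ℝ ∂volume, Q z.1 z.2) :
    ∀ᵐ p : ℝ × ℝ ∂volume, ∀ᵐ ξ : ℝ ∂volume, Q p.1 ξ := by
  rw [Measure.volume_eq_prod ℝ ℝ] at h ⊢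
  exact Measure.quasiMeasurePreserving_fst.ae (Measure.ae_ae_of_ae_prod h)

lemma ae_slice_snd {Q : ℝ → ℝ → Prop} (h : ∀ᵐ z : ℝ × ℝ ∂volume, Q z.1 z.2) :
    ∀ᵐ p : ℝ × ℝ ∂volume, ∀ᵐ ξ : ℝ ∂volume, Q ξ p.2 := by
  rw [Measure.volume_eq_prod ℝ ℝ] at h ⊢
  have h2 : ∀ᵐ z : ℝ × ℝ ∂((volume : Measure ℝ).prod volume), Q z.2 z.1 :=
    Measure.measurePreserving_swap.quasiMeasurePreserving.ae h
  exact Measure.quasiMeasurePreserving_snd.ae (Measure.ae_ae_of_ae_prod h2)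

/-- strong measurability of `p ↦ ∫ ξ in 0..a p, G (k p ξ)` for jointly measurable data -/
lemma sm_param_integral (G : ℝ × ℝ → ℝ) (hG : StronglyMeasurable G)
    (a : ℝ × ℝ → ℝ) (ha : Measurable a) (k : ℝ × ℝ → ℝ → ℝ × ℝ)
    (hk : Measurable fun q : (ℝ × ℝ) × ℝ => k q.1 q.2) :
    StronglyMeasurable fun p : ℝ × ℝ => ∫ ξ in (0:ℝ)..a p, G (k p ξ) := by
  have base : ∀ (S : Set ((ℝ × ℝ) × ℝ)), MeasurableSet S →
      StronglyMeasurable fun p : ℝ × ℝ => ∫ ξ : ℝ, S.indicator (fun q => G (k q.1 q.2)) (p, ξ) := by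
    intro S hS
    exact ((hG.comp_measurable hk).indicator hS).integral_prod_right'
  have e : (fun p : ℝ × ℝ => ∫ ξ in (0:ℝ)..a p, G (k p ξ)) =
      fun p => (∫ ξ : ℝ, ({q : (ℝ × ℝ) × ℝ | 0 < q.2 ∧ q.2 ≤ a q.1}.indicator
          (fun q => G (k q.1 q.2)) (p, ξ))) -
        ∫ ξ : ℝ, ({q : (ℝ × ℝ) × ℝ | a q.1 < q.2 ∧ q.2 ≤ 0}.indicator
          (fun q => G (k q.1 q.2)) (p, ξ)) := by
    funext p
    rw [intervalIntegral]
    congr 1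
    · rw [← integral_indicator measurableSet_Ioc]
      congr 1
    · rw [← integral_indicator measurableSet_Ioc]
      congr 1
  rw [e]
  apply StronglyMeasurable.sub
  · exact base _ ((measurableSet_lt measurable_const measurable_snd).inter
      (measurableSet_le measurable_snd (ha.comp measurable_fst)))
  · exact base _ ((measurableSet_lt (ha.comp measurable_fst) measurable_snd).inter
      (measurableSet_le measurable_snd measurable_const))

/-- a.e. strong measurability of `p ↦ ∫ ξ in 0..p.1, P (ξ, p.2)` -/
lemma aesm_int1 (P : ℝ × ℝ → ℝ) (hP : AEStronglyMeasurable P volume) :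
    AEStronglyMeasurable (fun p : ℝ × ℝ => ∫ ξ in (0:ℝ)..p.1, P (ξ, p.2)) volume := by
  obtain ⟨G, hG, hPG⟩ := hP
  refine ⟨fun p => ∫ ξ in (0:ℝ)..p.1, G (ξ, p.2), ?_, ?_⟩
  · exact sm_param_integral G hG (fun p => p.1) measurable_fst
      (fun p ξ => (ξ, p.2)) (measurable_snd.prodMk (measurable_fst.snd))
  · have hs := ae_slice_snd (Q := fun a b => P (a, b) = G (a, b)) hPG
    filter_upwards [hs] with p hp
    apply intervalIntegral.integral_congr_ae
    filter_upwards [hp] with ξ hξ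
    exact fun _ => hξ

/-- a.e. strong measurability of `p ↦ ∫ ξ in 0..p.2, P (p.1, ξ)` -/
lemma aesm_int2 (P : ℝ × ℝ → ℝ) (hP : AEStronglyMeasurable P volume) :
    AEStronglyMeasurable (fun p : ℝ × ℝ => ∫ ξ in (0:ℝ)..p.2, P (p.1, ξ)) volume := by
  obtain ⟨G, hG, hPG⟩ := hP
  refine ⟨fun p => ∫ ξ in (0:ℝ)..p.2, G (p.1, ξ), ?_, ?_⟩
  · exact sm_param_integral G hG (fun p => p.2) measurable_snd
      (fun p ξ => (p.1, ξ)) ((measurable_fst.fst).prodMk measurable_snd)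
  · have hs := ae_slice_fst (Q := fun a b => P (a, b) = G (a, b)) hPG
    filter_upwards [hs] with p hp
    apply intervalIntegral.integral_congr_ae
    filter_upwards [hp] with ξ hξ
    exact fun _ => hξ

lemma ae_ae_fst {Q : ℝ → ℝ → Prop} (h : ∀ᵐ z : ℝ × ℝ ∂volume, Q z.1 z.2) :
    ∀ᵐ x : ℝ ∂volume, ∀ᵐ y : ℝ ∂volume, Q x y := by
  rw [Measure.volume_eq_prod ℝ ℝ] at h
  exact Measure.ae_ae_of_ae_prod h

lemma ae_ae_snd {Q : ℝ → ℝ → Prop} (h : ∀ᵐ z : ℝ × ℝ ∂volume, Q z.1 z.2) :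
    ∀ᵐ y : ℝ ∂volume, ∀ᵐ x : ℝ ∂volume, Q x y := by
  rw [Measure.volume_eq_prod ℝ ℝ] at h
  have h2 : ∀ᵐ z : ℝ × ℝ ∂((volume : Measure ℝ).prod volume), Q z.2 z.1 :=
    Measure.measurePreserving_swap.quasiMeasurePreserving.ae h
  exact Measure.ae_ae_of_ae_prod h2

-- integral of a derivative of a compactly supported function vanishes
lemma integral_deriv_eq_zero {ψ : ℝ → ℝ} (hψ : ContDiff ℝ 1 ψ) (hcs : HasCompactSupport ψ) :
    ∫ x : ℝ, deriv ψ x = 0 := by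
  have hint : Integrable (deriv ψ) volume :=
    (hψ.continuous_deriv le_rfl).integrable_of_hasCompactSupport hcs.deriv
  have := intervalIntegral.integral_Iic_add_Ioi (b := (0:ℝ)) hint.integrableOn hint.integrableOn
  rw [HasCompactSupport.integral_Iic_deriv_eq hψ hcs 0,
    HasCompactSupport.integral_Ioi_deriv_eq hψ hcs 0] at this
  linarith [this.symm]

-- bound on the x-antiderivative
lemma antideriv_bound1 {P : ℝ × ℝ → ℝ} {M : ℝ} (hM : ∀ᵐ x : ℝ × ℝ ∂volume, ‖P x‖ ≤ M) :
    ∀ᵐ p : ℝ × ℝ ∂volume, ‖∫ ξ in (0:ℝ)..p.1, P (ξ, p.2)‖ ≤ M * |p.1| := by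
  filter_upwards [ae_slice_snd (Q := fun a b => ‖P (a, b)‖ ≤ M) hM] with p hp
  have := intervalIntegral.norm_integral_le_of_norm_le_const_ae
    (a := (0:ℝ)) (b := p.1) (C := M) (f := fun ξ => P (ξ, p.2))
    (by filter_upwards [hp] with ξ hξ; exact fun _ => hξ)
  simpa using this

lemma antideriv_bound2 {P : ℝ × ℝ → ℝ} {M : ℝ} (hM : ∀ᵐ x : ℝ × ℝ ∂volume, ‖P x‖ ≤ M) :
    ∀ᵐ p : ℝ × ℝ ∂volume, ‖∫ ξ in (0:ℝ)..p.2, P (p.1, ξ)‖ ≤ M * |p.2| := by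
  filter_upwards [ae_slice_fst (Q := fun a b => ‖P (a, b)‖ ≤ M) hM] with p hp
  have := intervalIntegral.norm_integral_le_of_norm_le_const_ae
    (a := (0:ℝ)) (b := p.2) (C := M) (f := fun ξ => P (p.1, ξ))
    (by filter_upwards [hp] with ξ hξ; exact fun _ => hξ)
  simpa using this

lemma div0 (Ω : Set (ℝ × ℝ)) (P : ℝ × ℝ → ℝ) (hP : AEStronglyMeasurable P volume)
    (M : ℝ) (hM0 : 0 ≤ M) (hM : ∀ᵐ x : ℝ × ℝ ∂volume, ‖P x‖ ≤ M)
    (φ : ℝ × ℝ → ℝ) (hφ : ContDiff ℝ (⊤ : ℕ∞) φ) (hφcs : HasCompactSupport φ)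
    (hφΩ : tsupport φ ⊆ Ω) :
    ∫ x in Ω, (-∫ ξ in (0:ℝ)..x.1, P (ξ, x.2)) * pd φ 0 x = ∫ x in Ω, P x * φ x := by
  have hφ1 : ContDiff ℝ 1 φ := hφ.of_le (by norm_num)
  -- bounds
  obtain ⟨Cd, hCd⟩ : ∃ C, ∀ x, ‖pd φ 0 x‖ ≤ C :=
    (HasCompactSupport.intro hφcs fun x hx => pd_eq_zero_of_nmem hx 0).exists_bound_of_continuous
      (pd_continuous hφ 0)
  obtain ⟨Cφ, hCφ⟩ : ∃ C, ∀ x, ‖φ x‖ ≤ C := hφcs.exists_bound_of_continuous hφ.continuous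
  obtain ⟨R₀, hR₀⟩ := hφcs.isBounded.subset_closedBall 0
  set Rφ := max R₀ 0 with hRφdef
  have hRφ : ∀ p ∈ tsupport φ, |p.1| ≤ Rφ := by
    intro p hp
    have h1 := hR₀ hp
    simp only [Metric.mem_closedBall, Real.dist_eq, dist_zero_right] at h1
    calc |p.1| = ‖p.1‖ := rfl
      _ ≤ ‖p‖ := norm_fst_le p
      _ ≤ Rφ := h1.trans (le_max_left _ _)
  set T : ℝ × ℝ → ℝ := fun p => -∫ ξ in (0:ℝ)..p.1, P (ξ, p.2) with hTdef
  have hTb : ∀ᵐ p : ℝ × ℝ ∂volume, ‖T p‖ ≤ M * |p.1| := by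
    filter_upwards [antideriv_bound1 hM] with p hp
    simpa [hTdef] using hp
  have hTaesm : AEStronglyMeasurable T volume := (aesm_int1 P hP).neg
  set f : ℝ × ℝ → ℝ := fun p => T p * pd φ 0 p with hfdef
  have hf0 : ∀ x ∉ Ω, f x = 0 := by
    intro x hx
    have : x ∉ tsupport φ := fun h => hx (hφΩ h)
    simp [hfdef, pd_eq_zero_of_nmem this 0]
  have hfint : Integrable f volume := by
    refine Integrable.mono' (g := (tsupport φ).indicator fun _ => M * Rφ * Cd) ?_
      (hTaesm.mul (pd_continuous hφ 0).aestronglyMeasurable) ?_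
    · exact (integrable_indicator_iff (isClosed_tsupport φ).measurableSet).2
        (integrableOn_const hφcs.measure_lt_top.ne)
    · filter_upwards [hTb] with p hp
      by_cases hmem : p ∈ tsupport φ
      · rw [indicator_of_mem hmem]
        calc ‖f p‖ = ‖T p‖ * ‖pd φ 0 p‖ := norm_mul _ _
          _ ≤ (M * |p.1|) * Cd := by
              apply mul_le_mul hp (hCd p) (norm_nonneg _)
              calc (0:ℝ) ≤ ‖T p‖ := norm_nonneg _
                _ ≤ M * |p.1| := hp
          _ ≤ (M * Rφ) * Cd := by
              have hCd0 : 0 ≤ Cd := le_trans (norm_nonneg _) (hCd p)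
              exact mul_le_mul_of_nonneg_right
                (mul_le_mul_of_nonneg_left (hRφ p hmem) hM0) hCd0
      · rw [indicator_of_notMem hmem]
        have hpd : pd φ 0 p = 0 := pd_eq_zero_of_nmem hmem 0
        have hRφ0 : 0 ≤ Rφ := le_max_right _ _
        have hCd0 : 0 ≤ Cd := le_trans (norm_nonneg _) (hCd 0)
        simp only [hfdef, hpd, mul_zero, norm_zero]
        positivity
  -- extend the integrals to ℝ² and apply Fubini
  obtain ⟨G, hG, hPG⟩ := hP
  have hPφint : Integrable (fun z => P z * φ z) volume := by
    refine Integrable.mono' (g := (tsupport φ).indicator fun _ => M * Cφ) ?_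
      (⟨fun z => G z * φ z, hG.mul hφ.continuous.stronglyMeasurable,
        by filter_upwards [hPG] with z hz; rw [hz]⟩) ?_
    · exact (integrable_indicator_iff (isClosed_tsupport φ).measurableSet).2
        (integrableOn_const hφcs.measure_lt_top.ne)
    · filter_upwards [hM] with p hp
      by_cases hmem : p ∈ tsupport φ
      · rw [indicator_of_mem hmem, norm_mul]
        exact mul_le_mul hp (hCφ p) (norm_nonneg _) hM0
      · rw [indicator_of_notMem hmem, image_eq_zero_of_notMem_tsupport hmem]
        simp
  have inner_eq : ∀ᵐ y : ℝ ∂volume,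
      ∫ x : ℝ, f (x, y) = ∫ x : ℝ, P (x, y) * φ (x, y) := by
    filter_upwards [ae_ae_snd (Q := fun a b => P (a, b) = G (a, b)) hPG,
      ae_ae_snd (Q := fun a b => ‖P (a, b)‖ ≤ M) hM] with y hy1 hy2
    have hslice : AEStronglyMeasurable (fun ξ => P (ξ, y)) volume :=
      ⟨fun ξ => G (ξ, y), hG.comp_measurable (measurable_id.prodMk measurable_const), hy1⟩
    have hkey := key1d (fun ξ => P (ξ, y)) hslice M hy2 (fun t => φ (t, y))
      (slice1_contDiff hφ1 y) (slice1_compactSupport hφcs y)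
    calc ∫ x : ℝ, f (x, y)
        = ∫ x : ℝ, -((∫ ξ in (0:ℝ)..x, P (ξ, y)) * deriv (fun t => φ (t, y)) x) := by
          congr 1
          funext x
          rw [(slice1_hasDerivAt hφ1 x y).deriv]
          simp [hfdef, hTdef]
      _ = -∫ x : ℝ, (∫ ξ in (0:ℝ)..x, P (ξ, y)) * deriv (fun t => φ (t, y)) x :=
          integral_neg _
      _ = ∫ x : ℝ, P (x, y) * φ (x, y) := by rw [hkey, neg_neg]
  calc ∫ x in Ω, (-∫ ξ in (0:ℝ)..x.1, P (ξ, x.2)) * pd φ 0 x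
      = ∫ x : ℝ × ℝ, f x := setIntegral_eq_integral_of_forall_compl_eq_zero hf0
    _ = ∫ y : ℝ, ∫ x : ℝ, f (x, y) := by
        rw [Measure.volume_eq_prod ℝ ℝ]
        exact integral_prod_symm f (by rwa [← Measure.volume_eq_prod ℝ ℝ])
    _ = ∫ y : ℝ, ∫ x : ℝ, P (x, y) * φ (x, y) := integral_congr_ae inner_eq
    _ = ∫ z : ℝ × ℝ, P z * φ z := by
        rw [Measure.volume_eq_prod ℝ ℝ]
        exact (integral_prod_symm _ (by rwa [← Measure.volume_eq_prod ℝ ℝ])).symm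
    _ = ∫ x in Ω, P x * φ x := by
        refine (setIntegral_eq_integral_of_forall_compl_eq_zero fun x hx => ?_).symm
        rw [image_eq_zero_of_notMem_tsupport fun h => hx (hφΩ h), mul_zero]

lemma div1 (Ω : Set (ℝ × ℝ)) (P : ℝ × ℝ → ℝ) (hP : AEStronglyMeasurable P volume)
    (M : ℝ) (hM0 : 0 ≤ M) (hM : ∀ᵐ x : ℝ × ℝ ∂volume, ‖P x‖ ≤ M)
    (φ : ℝ × ℝ → ℝ) (hφ : ContDiff ℝ (⊤ : ℕ∞) φ) (hφcs : HasCompactSupport φ)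
    (hφΩ : tsupport φ ⊆ Ω) :
    ∫ x in Ω, (-∫ ξ in (0:ℝ)..x.2, P (x.1, ξ)) * pd φ 1 x = ∫ x in Ω, P x * φ x := by
  have hφ1 : ContDiff ℝ 1 φ := hφ.of_le (by norm_num)
  obtain ⟨Cd, hCd⟩ : ∃ C, ∀ x, ‖pd φ 1 x‖ ≤ C :=
    (HasCompactSupport.intro hφcs fun x hx => pd_eq_zero_of_nmem hx 1).exists_bound_of_continuous
      (pd_continuous hφ 1)
  obtain ⟨Cφ, hCφ⟩ : ∃ C, ∀ x, ‖φ x‖ ≤ C := hφcs.exists_bound_of_continuous hφ.continuous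
  obtain ⟨R₀, hR₀⟩ := hφcs.isBounded.subset_closedBall 0
  set Rφ := max R₀ 0 with hRφdef
  have hRφ : ∀ p ∈ tsupport φ, |p.2| ≤ Rφ := by
    intro p hp
    have h1 := hR₀ hp
    simp only [Metric.mem_closedBall, Real.dist_eq, dist_zero_right] at h1
    calc |p.2| = ‖p.2‖ := rfl
      _ ≤ ‖p‖ := norm_snd_le p
      _ ≤ Rφ := h1.trans (le_max_left _ _)
  set T : ℝ × ℝ → ℝ := fun p => -∫ ξ in (0:ℝ)..p.2, P (p.1, ξ) with hTdef
  have hTb : ∀ᵐ p : ℝ × ℝ ∂volume, ‖T p‖ ≤ M * |p.2| := by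
    filter_upwards [antideriv_bound2 hM] with p hp
    simpa [hTdef] using hp
  have hTaesm : AEStronglyMeasurable T volume := (aesm_int2 P hP).neg
  set f : ℝ × ℝ → ℝ := fun p => T p * pd φ 1 p with hfdef
  have hf0 : ∀ x ∉ Ω, f x = 0 := by
    intro x hx
    have : x ∉ tsupport φ := fun h => hx (hφΩ h)
    simp [hfdef, pd_eq_zero_of_nmem this 1]
  have hfint : Integrable f volume := by
    refine Integrable.mono' (g := (tsupport φ).indicator fun _ => M * Rφ * Cd) ?_
      (hTaesm.mul (pd_continuous hφ 1).aestronglyMeasurable) ?_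
    · exact (integrable_indicator_iff (isClosed_tsupport φ).measurableSet).2
        (integrableOn_const hφcs.measure_lt_top.ne)
    · filter_upwards [hTb] with p hp
      by_cases hmem : p ∈ tsupport φ
      · rw [indicator_of_mem hmem]
        calc ‖f p‖ = ‖T p‖ * ‖pd φ 1 p‖ := norm_mul _ _
          _ ≤ (M * |p.2|) * Cd := by
              apply mul_le_mul hp (hCd p) (norm_nonneg _)
              calc (0:ℝ) ≤ ‖T p‖ := norm_nonneg _
                _ ≤ M * |p.2| := hp
          _ ≤ (M * Rφ) * Cd := by
              have hCd0 : 0 ≤ Cd := le_trans (norm_nonneg _) (hCd p)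
              exact mul_le_mul_of_nonneg_right
                (mul_le_mul_of_nonneg_left (hRφ p hmem) hM0) hCd0
      · rw [indicator_of_notMem hmem]
        have hpd : pd φ 1 p = 0 := pd_eq_zero_of_nmem hmem 1
        have hRφ0 : 0 ≤ Rφ := le_max_right _ _
        have hCd0 : 0 ≤ Cd := le_trans (norm_nonneg _) (hCd 0)
        simp only [hfdef, hpd, mul_zero, norm_zero]
        positivity
  obtain ⟨G, hG, hPG⟩ := hP
  have hPφint : Integrable (fun z => P z * φ z) volume := by
    refine Integrable.mono' (g := (tsupport φ).indicator fun _ => M * Cφ) ?_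
      (⟨fun z => G z * φ z, hG.mul hφ.continuous.stronglyMeasurable,
        by filter_upwards [hPG] with z hz; rw [hz]⟩) ?_
    · exact (integrable_indicator_iff (isClosed_tsupport φ).measurableSet).2
        (integrableOn_const hφcs.measure_lt_top.ne)
    · filter_upwards [hM] with p hp
      by_cases hmem : p ∈ tsupport φ
      · rw [indicator_of_mem hmem, norm_mul]
        exact mul_le_mul hp (hCφ p) (norm_nonneg _) hM0
      · rw [indicator_of_notMem hmem, image_eq_zero_of_notMem_tsupport hmem]
        simp
  have inner_eq : ∀ᵐ x : ℝ ∂volume,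
      ∫ y : ℝ, f (x, y) = ∫ y : ℝ, P (x, y) * φ (x, y) := by
    filter_upwards [ae_ae_fst (Q := fun a b => P (a, b) = G (a, b)) hPG,
      ae_ae_fst (Q := fun a b => ‖P (a, b)‖ ≤ M) hM] with x hx1 hx2
    have hslice : AEStronglyMeasurable (fun ξ => P (x, ξ)) volume :=
      ⟨fun ξ => G (x, ξ), hG.comp_measurable (measurable_const.prodMk measurable_id), hx1⟩
    have hkey := key1d (fun ξ => P (x, ξ)) hslice M hx2 (fun t => φ (x, t))
      (slice2_contDiff hφ1 x) (slice2_compactSupport hφcs x)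
    calc ∫ y : ℝ, f (x, y)
        = ∫ y : ℝ, -((∫ ξ in (0:ℝ)..y, P (x, ξ)) * deriv (fun t => φ (x, t)) y) := by
          congr 1
          funext y
          rw [(slice2_hasDerivAt hφ1 x y).deriv]
          simp [hfdef, hTdef]
      _ = -∫ y : ℝ, (∫ ξ in (0:ℝ)..y, P (x, ξ)) * deriv (fun t => φ (x, t)) y :=
          integral_neg _
      _ = ∫ y : ℝ, P (x, y) * φ (x, y) := by rw [hkey, neg_neg]
  calc ∫ x in Ω, (-∫ ξ in (0:ℝ)..x.2, P (x.1, ξ)) * pd φ 1 x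
      = ∫ x : ℝ × ℝ, f x := setIntegral_eq_integral_of_forall_compl_eq_zero hf0
    _ = ∫ x : ℝ, ∫ y : ℝ, f (x, y) := by
        rw [Measure.volume_eq_prod ℝ ℝ]
        exact integral_prod f (by rwa [← Measure.volume_eq_prod ℝ ℝ])
    _ = ∫ x : ℝ, ∫ y : ℝ, P (x, y) * φ (x, y) := integral_congr_ae inner_eq
    _ = ∫ z : ℝ × ℝ, P z * φ z := by
        rw [Measure.volume_eq_prod ℝ ℝ]
        exact (integral_prod _ (by rwa [← Measure.volume_eq_prod ℝ ℝ])).symm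
    _ = ∫ x in Ω, P x * φ x := by
        refine (setIntegral_eq_integral_of_forall_compl_eq_zero fun x hx => ?_).symm
        rw [image_eq_zero_of_notMem_tsupport fun h => hx (hφΩ h), mul_zero]

lemma pd_integral_zero (Ω : Set (ℝ × ℝ)) (φ : ℝ × ℝ → ℝ) (hφ : ContDiff ℝ (⊤ : ℕ∞) φ)
    (hφcs : HasCompactSupport φ) (hφΩ : tsupport φ ⊆ Ω) (α : Fin 2) :
    ∫ x in Ω, pd φ α x = 0 := by
  have hφ1 : ContDiff ℝ 1 φ := hφ.of_le (by norm_num)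
  have hcs' : HasCompactSupport (pd φ α) :=
    HasCompactSupport.intro hφcs fun x hx => pd_eq_zero_of_nmem hx α
  have hint : Integrable (pd φ α) volume :=
    (pd_continuous hφ α).integrable_of_hasCompactSupport hcs'
  have h0 : ∀ x ∉ Ω, pd φ α x = 0 := fun x hx =>
    pd_eq_zero_of_nmem (fun h => hx (hφΩ h)) α
  rw [setIntegral_eq_integral_of_forall_compl_eq_zero h0]
  fin_cases α
  · rw [Measure.volume_eq_prod ℝ ℝ,
      integral_prod_symm _ (by rwa [← Measure.volume_eq_prod ℝ ℝ])]
    have h1 : ∀ y : ℝ, ∫ x : ℝ, pd φ 0 (x, y) = 0 := by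
      intro y
      have e : (fun x : ℝ => pd φ 0 (x, y)) = fun x => deriv (fun t => φ (t, y)) x := by
        funext x; rw [(slice1_hasDerivAt hφ1 x y).deriv]
      rw [e]
      exact integral_deriv_eq_zero (slice1_contDiff hφ1 y) (slice1_compactSupport hφcs y)
    simp [h1]
  · rw [Measure.volume_eq_prod ℝ ℝ,
      integral_prod _ (by rwa [← Measure.volume_eq_prod ℝ ℝ])]
    have h1 : ∀ x : ℝ, ∫ y : ℝ, pd φ 1 (x, y) = 0 := by
      intro x
      have e : (fun y : ℝ => pd φ 1 (x, y)) = fun y => deriv (fun t => φ (x, t)) y := by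
        funext y; rw [(slice2_hasDerivAt hφ1 x y).deriv]
      rw [e]
      exact integral_deriv_eq_zero (slice2_contDiff hφ1 x) (slice2_compactSupport hφcs x)
    simp [h1]

end AuxLemmas

/-- construction of a symmetric, essentially bounded, distributional
antiderivative tensor `T̃` with `T̃_{αβ,β} = -P_α`, which after adding a large
multiple of the identity becomes uniformly positive definite while still
satisfying `T_{αβ,β} = -P_α`. -/
theorem statement1
    (Ω : Set (ℝ × ℝ)) (hΩo : IsOpen Ω) (hΩb : Bornology.IsBounded Ω)
    (P : Fin 2 → ℝ × ℝ → ℝ)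
    (hPbd : ∀ α, MemLp (P α) ⊤ volume)
    (hPmeas : ∀ α, AEStronglyMeasurable (P α) volume)
    (hPsupp : ∀ α, ∀ x ∉ Ω, P α x = 0)
    (Ttil : Fin 2 → Fin 2 → ℝ × ℝ → ℝ)
    (hT11 : ∀ p : ℝ × ℝ, Ttil 0 0 p = -∫ ξ in (0 : ℝ)..p.1, P 0 (ξ, p.2))
    (hT22 : ∀ p : ℝ × ℝ, Ttil 1 1 p = -∫ ξ in (0 : ℝ)..p.2, P 1 (p.1, ξ))
    (hT12 : ∀ p : ℝ × ℝ, Ttil 0 1 p = 0)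
    (hT21 : ∀ p : ℝ × ℝ, Ttil 1 0 p = 0) :
    -- `T̃` is symmetric
    (∀ α β, ∀ x, Ttil α β x = Ttil β α x) ∧
    -- `T̃` is essentially bounded on `Ω`
    (∀ α β, MemLp (Ttil α β) ⊤ (volume.restrict Ω)) ∧
    -- distributional divergence identity `T̃_{αβ,β} = -P_α` in `Ω`:
    -- `∫_Ω T̃_{αβ} φ_{,β} dx = ∫_Ω P_α φ dx` for all test functions `φ`
    (∀ α, ∀ φ : ℝ × ℝ → ℝ, TestFun Ω φ →
      (∫ x in Ω, ∑ β, Ttil α β x * pd φ β x) = ∫ x in Ω, P α x * φ x) ∧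
    -- a large constant shift makes it uniformly positive definite a.e. in `Ω`,
    -- while the shifted tensor satisfies the same divergence identity
    (∃ C > (0 : ℝ), ∃ c > (0 : ℝ),
      (∀ᵐ x ∂volume.restrict Ω, ∀ ξ : Fin 2 → ℝ,
        c * (ξ 0 ^ 2 + ξ 1 ^ 2) ≤
          ∑ α, ∑ β, (Ttil α β x + (if α = β then C else 0)) * ξ α * ξ β) ∧
      (∀ α, ∀ φ : ℝ × ℝ → ℝ, TestFun Ω φ →
        (∫ x in Ω, ∑ β, (Ttil α β x + (if α = β then C else 0)) * pd φ β x) =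
          ∫ x in Ω, P α x * φ x)) := by
  -- uniform bound on the loads
  have hSbd : ∀ α : Fin 2, ∀ᵐ x : ℝ × ℝ ∂volume,
      ‖P α x‖ ≤ (eLpNorm (P α) ⊤ volume).toReal := by
    intro α
    filter_upwards [enorm_ae_le_eLpNormEssSup (P α) volume] with x hx
    have h2 : eLpNormEssSup (P α) volume ≠ ⊤ := by
      rw [← eLpNorm_exponent_top]; exact (hPbd α).eLpNorm_ne_top
    calc ‖P α x‖ = ((‖P α x‖₊ : ENNReal)).toReal := by simp
      _ ≤ (eLpNormEssSup (P α) volume).toReal := ENNReal.toReal_mono h2 hx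
      _ = (eLpNorm (P α) ⊤ volume).toReal := by rw [eLpNorm_exponent_top]
  set M : ℝ := max (eLpNorm (P 0) ⊤ volume).toReal (eLpNorm (P 1) ⊤ volume).toReal with hMdef
  have hM0 : 0 ≤ M := le_trans ENNReal.toReal_nonneg (le_max_left _ _)
  have hMP : ∀ α : Fin 2, ∀ᵐ x : ℝ × ℝ ∂volume, ‖P α x‖ ≤ M := by
    intro α
    fin_cases α
    · filter_upwards [hSbd 0] with x hx; exact hx.trans (le_max_left _ _)
    · filter_upwards [hSbd 1] with x hx; exact hx.trans (le_max_right _ _)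
  -- bound on the domain
  obtain ⟨R₀, hR₀⟩ := hΩb.subset_closedBall 0
  set R : ℝ := max R₀ 0 with hRdef
  have hR0 : 0 ≤ R := le_max_right _ _
  have hΩR : ∀ p ∈ Ω, |p.1| ≤ R ∧ |p.2| ≤ R := by
    intro p hp
    have h1 := hR₀ hp
    simp only [Metric.mem_closedBall, dist_zero_right] at h1
    exact ⟨le_trans (norm_fst_le p) (h1.trans (le_max_left _ _)),
      le_trans (norm_snd_le p) (h1.trans (le_max_left _ _))⟩
  have hOmeas : MeasurableSet Ω := hΩo.measurableSet
  -- symmetry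
  have sym : ∀ α β, ∀ x, Ttil α β x = Ttil β α x := by
    intro α β x
    fin_cases α <;> fin_cases β <;> simp [hT12 x, hT21 x]
  -- a.e. bounds on the diagonal entries
  have hb00 : ∀ᵐ p : ℝ × ℝ ∂volume, ‖Ttil 0 0 p‖ ≤ M * |p.1| := by
    filter_upwards [antideriv_bound1 (hMP 0)] with p hp
    rw [hT11 p]
    simpa using hp
  have hb11 : ∀ᵐ p : ℝ × ℝ ∂volume, ‖Ttil 1 1 p‖ ≤ M * |p.2| := by
    filter_upwards [antideriv_bound2 (hMP 1)] with p hp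
    rw [hT22 p]
    simpa using hp
  have haesm00 : AEStronglyMeasurable (Ttil 0 0) volume := by
    have e : Ttil 0 0 = fun p => -∫ ξ in (0:ℝ)..p.1, P 0 (ξ, p.2) := funext hT11
    rw [e]; exact (aesm_int1 _ (hPmeas 0)).neg
  have haesm11 : AEStronglyMeasurable (Ttil 1 1) volume := by
    have e : Ttil 1 1 = fun p => -∫ ξ in (0:ℝ)..p.2, P 1 (p.1, ξ) := funext hT22
    rw [e]; exact (aesm_int2 _ (hPmeas 1)).neg
  -- essential boundedness
  have memtop : ∀ α β, MemLp (Ttil α β) ⊤ (volume.restrict Ω) := by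
    intro α β
    fin_cases α <;> fin_cases β
    · show MemLp (Ttil 0 0) ⊤ (volume.restrict Ω)
      refine memLp_top_of_bound haesm00.restrict (M * R) ?_
      filter_upwards [ae_restrict_of_ae hb00, ae_restrict_mem hOmeas] with p h1 h2
      exact h1.trans (mul_le_mul_of_nonneg_left (hΩR p h2).1 hM0)
    · show MemLp (Ttil 0 1) ⊤ (volume.restrict Ω)
      have e : Ttil 0 1 = fun _ => (0:ℝ) := funext hT12
      rw [e]; exact memLp_top_const 0
    · show MemLp (Ttil 1 0) ⊤ (volume.restrict Ω)
      have e : Ttil 1 0 = fun _ => (0:ℝ) := funext hT21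
      rw [e]; exact memLp_top_const 0
    · show MemLp (Ttil 1 1) ⊤ (volume.restrict Ω)
      refine memLp_top_of_bound haesm11.restrict (M * R) ?_
      filter_upwards [ae_restrict_of_ae hb11, ae_restrict_mem hOmeas] with p h1 h2
      exact h1.trans (mul_le_mul_of_nonneg_left (hΩR p h2).2 hM0)
  -- the divergence identity
  have div : ∀ α, ∀ φ : ℝ × ℝ → ℝ, TestFun Ω φ →
      (∫ x in Ω, ∑ β, Ttil α β x * pd φ β x) = ∫ x in Ω, P α x * φ x := by
    intro α φ hφt
    obtain ⟨hφs, hφcs, hφΩ⟩ := hφt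
    fin_cases α
    · show (∫ x in Ω, ∑ β, Ttil 0 β x * pd φ β x) = ∫ x in Ω, P 0 x * φ x
      have e : ∀ x, (∑ β, Ttil 0 β x * pd φ β x)
          = (-∫ ξ in (0:ℝ)..x.1, P 0 (ξ, x.2)) * pd φ 0 x := by
        intro x
        rw [Fin.sum_univ_two, hT12 x, hT11 x]
        ring
      simp only [e]
      exact div0 Ω (P 0) (hPmeas 0) M hM0 (hMP 0) φ hφs hφcs hφΩ
    · show (∫ x in Ω, ∑ β, Ttil 1 β x * pd φ β x) = ∫ x in Ω, P 1 x * φ x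
      have e : ∀ x, (∑ β, Ttil 1 β x * pd φ β x)
          = (-∫ ξ in (0:ℝ)..x.2, P 1 (x.1, ξ)) * pd φ 1 x := by
        intro x
        rw [Fin.sum_univ_two, hT21 x, hT22 x]
        ring
      simp only [e]
      exact div1 Ω (P 1) (hPmeas 1) M hM0 (hMP 1) φ hφs hφcs hφΩ
  refine ⟨sym, memtop, div, M * R + 1, by positivity, 1, one_pos, ?_, ?_⟩
  · -- uniform positive definiteness
    filter_upwards [ae_restrict_of_ae hb00, ae_restrict_of_ae hb11, ae_restrict_mem hOmeas]
      with p h1 h2 hm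
    intro ξ
    have e1 : |Ttil 0 0 p| ≤ M * R := h1.trans (mul_le_mul_of_nonneg_left (hΩR p hm).1 hM0)
    have e2 : |Ttil 1 1 p| ≤ M * R := h2.trans (mul_le_mul_of_nonneg_left (hΩR p hm).2 hM0)
    have k1 : 1 ≤ Ttil 0 0 p + (M * R + 1) := by linarith [(abs_le.1 e1).1]
    have k2 : 1 ≤ Ttil 1 1 p + (M * R + 1) := by linarith [(abs_le.1 e2).1]
    simp only [Fin.sum_univ_two, hT12 p, hT21 p]
    norm_num
    nlinarith [mul_le_mul_of_nonneg_right k1 (sq_nonneg (ξ 0)),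
      mul_le_mul_of_nonneg_right k2 (sq_nonneg (ξ 1)), sq_nonneg (ξ 0), sq_nonneg (ξ 1)]
  · -- divergence identity for the shifted tensor
    intro α φ hφt
    obtain ⟨hφs, hφcs, hφΩ⟩ := hφt
    have hΩfin : volume Ω < ⊤ := hΩb.measure_lt_top
    obtain ⟨Cd0, hCd0⟩ : ∃ C, ∀ x, ‖pd φ 0 x‖ ≤ C :=
      (HasCompactSupport.intro hφcs fun x hx => pd_eq_zero_of_nmem hx 0).exists_bound_of_continuous
        (pd_continuous hφs 0)
    obtain ⟨Cd1, hCd1⟩ : ∃ C, ∀ x, ‖pd φ 1 x‖ ≤ C :=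
      (HasCompactSupport.intro hφcs fun x hx => pd_eq_zero_of_nmem hx 1).exists_bound_of_continuous
        (pd_continuous hφs 1)
    have e : ∀ x, (∑ β, (Ttil α β x + if α = β then M * R + 1 else 0) * pd φ β x)
        = (∑ β, Ttil α β x * pd φ β x) + (M * R + 1) * pd φ α x := by
      intro x
      fin_cases α <;> simp [Fin.sum_univ_two] <;> ring
    simp only [e]
    have I1 : IntegrableOn (fun x => ∑ β, Ttil α β x * pd φ β x) Ω volume := by
      have haesmS : AEStronglyMeasurable (fun x => ∑ β, Ttil α β x * pd φ β x)
          (volume.restrict Ω) := by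
        fin_cases α
        · show AEStronglyMeasurable (fun x => ∑ β, Ttil 0 β x * pd φ β x) (volume.restrict Ω)
          have e2 : (fun x => ∑ β, Ttil 0 β x * pd φ β x)
              = fun x => Ttil 0 0 x * pd φ 0 x := by
            funext x; rw [Fin.sum_univ_two, hT12 x]; ring
          rw [e2]
          exact (haesm00.mul (pd_continuous hφs 0).aestronglyMeasurable).restrict
        · show AEStronglyMeasurable (fun x => ∑ β, Ttil 1 β x * pd φ β x) (volume.restrict Ω)
          have e2 : (fun x => ∑ β, Ttil 1 β x * pd φ β x)
              = fun x => Ttil 1 1 x * pd φ 1 x := by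
            funext x; rw [Fin.sum_univ_two, hT21 x]; ring
          rw [e2]
          exact (haesm11.mul (pd_continuous hφs 1).aestronglyMeasurable).restrict
      refine Integrable.mono' (g := fun _ => (M * R) * Cd0 + (M * R) * Cd1)
        (integrableOn_const hΩfin.ne) haesmS ?_
      filter_upwards [ae_restrict_of_ae hb00, ae_restrict_of_ae hb11, ae_restrict_mem hOmeas]
        with p h1 h2 hm
      have e1 : ‖Ttil 0 0 p‖ ≤ M * R := h1.trans (mul_le_mul_of_nonneg_left (hΩR p hm).1 hM0)
      have e2 : ‖Ttil 1 1 p‖ ≤ M * R := h2.trans (mul_le_mul_of_nonneg_left (hΩR p hm).2 hM0)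
      have hMR0 : 0 ≤ M * R := by positivity
      have c0 : 0 ≤ Cd0 := le_trans (norm_nonneg _) (hCd0 0)
      have c1 : 0 ≤ Cd1 := le_trans (norm_nonneg _) (hCd1 0)
      calc ‖∑ β, Ttil α β p * pd φ β p‖
          ≤ ‖Ttil α 0 p * pd φ 0 p‖ + ‖Ttil α 1 p * pd φ 1 p‖ := by
            rw [Fin.sum_univ_two]; exact norm_add_le _ _
        _ ≤ (M * R) * Cd0 + (M * R) * Cd1 := by
            apply add_le_add
            · rw [norm_mul]
              fin_cases α
              · exact mul_le_mul e1 (hCd0 p) (norm_nonneg _) hMR0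
              · show ‖Ttil 1 0 p‖ * ‖pd φ 0 p‖ ≤ M * R * Cd0
                rw [hT21 p]; simp; positivity
            · rw [norm_mul]
              fin_cases α
              · show ‖Ttil 0 1 p‖ * ‖pd φ 1 p‖ ≤ M * R * Cd1
                rw [hT12 p]; simp; positivity
              · exact mul_le_mul e2 (hCd1 p) (norm_nonneg _) hMR0
    have I2 : IntegrableOn (fun x => (M * R + 1) * pd φ α x) Ω volume :=
      (((pd_continuous hφs α).integrable_of_hasCompactSupport
        (HasCompactSupport.intro hφcs fun x hx => pd_eq_zero_of_nmem hx α)).const_mul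
        (M * R + 1)).integrableOn
    rw [integral_add I1 I2, div α φ ⟨hφs, hφcs, hφΩ⟩, integral_const_mul,
      pd_integral_zero Ω φ hφs hφcs hφΩ α, mul_zero, add_zero]
end
end

section
/- Let ∂Ω = Γ₀ ∪ Γ_t with m_Γ(Γ₀ ∩ Γ_t) = 0 and m_Γ(Γ₀) > 0, and let T₀ ∈ L²(Ω;ℝ^{2×2}) be symmetric with (T₀)_{αβ,β} + P_α = 0 in Ω and (T₀)_{αβ} n_β = P^t_α on Γ_t (in the weak sense). Then for every u = (u_α, w) ∈ U the decomposition J(u) = J₁(u) + G₁(γ(u)) − ⟨(T₀)_{αβ}, γ_{αβ}(u)⟩_{L²} holds, where J(u) = G₁(γ(u)) + G₂(κ(u)) − ⟨P_α, u_α⟩_{L²(Ω)} − ⟨w, P⟩_{L²(Ω)} − ⟨P^t_α, u_α⟩_{L²(Γ_t)} − ⟨P^t, w⟩_{L²(Γ_t)} and J₁(u) = G₂(κ(u)) + (1/2)⟨(T₀)_{αβ}, w_{,α} w_{,β}⟩_{L²} − ⟨P, w⟩_{L²(Ω)} − ⟨P^t, w⟩_{L²(Γ_t)}. -/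
open MeasureTheory Filter Topology

noncomputable section

/-- Admissible set for the mixed boundary-condition plate:
`u_α = w = ∂w/∂n = 0` on `Γ₀`. -/
def UadMixed (Γ₀ : Set (ℝ × ℝ)) : Set Config :=
  {u | (∀ α, ContDiff ℝ 1 (u.1 α)) ∧ ContDiff ℝ 2 u.2 ∧
       (∀ α, ∀ x ∈ Γ₀, u.1 α x = 0) ∧
       (∀ x ∈ Γ₀, u.2 x = 0) ∧
       (∀ x ∈ Γ₀, fderiv ℝ u.2 x = 0)}

/-- the decomposition `J(u) = J₁(u) + G₁(γ(u)) - ⟨(T₀)_{αβ}, γ_{αβ}(u)⟩`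
for every admissible `u`, where `T₀` is a symmetric `L²` tensor field in weak
equilibrium with the loads `P_α, P^t_α`. -/
theorem statement5
    (Ω : Set (ℝ × ℝ)) (hΩo : IsOpen Ω) (hΩb : Bornology.IsBounded Ω) (hΩc : IsConnected Ω)
    (σ : Measure (ℝ × ℝ)) -- the boundary (Lebesgue surface) measure `m_Γ` on `∂Ω`
    (Γ₀ Γt : Set (ℝ × ℝ))
    (hΓ : Γ₀ ∪ Γt = frontier Ω) (hΓcap : σ (Γ₀ ∩ Γt) = 0) (hΓ0 : 0 < σ Γ₀)
    (H : Tensor4) (hH : SymPosDef H) (hth : ℝ) (hthpos : 0 < hth)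
    (P : Fin 2 → ℝ × ℝ → ℝ) (hP : ∀ α, MemLp (P α) 2 (volume.restrict Ω))
    (P3 : ℝ × ℝ → ℝ) (hP3 : MemLp P3 2 (volume.restrict Ω))
    (Pt : Fin 2 → ℝ × ℝ → ℝ) (hPt : ∀ α, MemLp (Pt α) 2 (σ.restrict Γt))
    (Pt3 : ℝ × ℝ → ℝ) (hPt3 : MemLp Pt3 2 (σ.restrict Γt))
    -- `T₀`: symmetric, square integrable, in weak equilibrium
    (T₀ : Fin 2 → Fin 2 → ℝ × ℝ → ℝ)
    (hT₀sym : ∀ α β x, T₀ α β x = T₀ β α x)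
    (hT₀L2 : L2mat Ω T₀)
    (hT₀eq : ∀ v : Fin 2 → ℝ × ℝ → ℝ, (∀ α, ContDiff ℝ 1 (v α)) →
      (∀ α, ∀ x ∈ Γ₀, v α x = 0) →
      (∑ α, ∑ β, ∫ x in Ω, T₀ α β x * pd (v α) β x) =
        (∑ α, ∫ x in Ω, P α x * v α x) + ∑ α, ∫ x in Γt, Pt α x * v α x ∂σ)
    -- the functionals `J` and `J₁`
    (J J₁ : Config → ℝ)
    (hJ : ∀ u, J u =
      G1 H Ω u + G2 (fun α β l m => hth ^ 2 / 12 * H α β l m) Ω u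
        - (∑ α, ∫ x in Ω, P α x * u.1 α x) - (∫ x in Ω, u.2 x * P3 x)
        - (∑ α, ∫ x in Γt, Pt α x * u.1 α x ∂σ) - ∫ x in Γt, Pt3 x * u.2 x ∂σ)
    (hJ₁ : ∀ u, J₁ u =
      G2 (fun α β l m => hth ^ 2 / 12 * H α β l m) Ω u
        + (1 / 2) * (∑ α, ∑ β, ∫ x in Ω, T₀ α β x * pd u.2 α x * pd u.2 β x)
        - (∫ x in Ω, P3 x * u.2 x) - ∫ x in Γt, Pt3 x * u.2 x ∂σ) :
    ∀ u ∈ UadMixed Γ₀,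
      J u = J₁ u + G1 H Ω u - ∑ α, ∑ β, ∫ x in Ω, T₀ α β x * gam u α β x := by
  intro u hu
  obtain ⟨hu1, hu2, hbc1, _, _⟩ := hu
  have hfin : IsFiniteMeasure (volume.restrict Ω) := by
    constructor
    rw [Measure.restrict_apply_univ]
    exact hΩb.measure_lt_top
  -- integrability of T₀ times a continuous function
  have hint : ∀ (α β : Fin 2) (g : ℝ × ℝ → ℝ), Continuous g →
      Integrable (fun x => T₀ α β x * g x) (volume.restrict Ω) := by
    intro α β g hg
    obtain ⟨C, hC⟩ := (hΩb.isCompact_closure).exists_bound_of_continuousOn hg.continuousOn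
    have hT : Integrable (T₀ α β) (volume.restrict Ω) := (hT₀L2 α β).integrable one_le_two
    have hb : ∀ᵐ x ∂(volume.restrict Ω), ‖g x‖ ≤ C := by
      filter_upwards [ae_restrict_mem hΩo.measurableSet] with x hx
      exact hC x (subset_closure hx)
    have := hT.bdd_mul (c := C) hg.aestronglyMeasurable hb
    simpa [mul_comm] using this
  -- continuity of partial derivatives
  have hpdc : ∀ (f : ℝ × ℝ → ℝ), ContDiff ℝ 1 f → ∀ i, Continuous (pd f i) := by
    intro f hf i
    exact (hf.continuous_fderiv one_ne_zero).clm_apply continuous_const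
  have hw1 : ContDiff ℝ 1 u.2 := hu2.of_le one_le_two
  -- splitting each integral
  have split : ∀ α β : Fin 2, (∫ x in Ω, T₀ α β x * gam u α β x) =
      (1 / 2) * (∫ x in Ω, T₀ α β x * pd (u.1 α) β x)
      + (1 / 2) * (∫ x in Ω, T₀ α β x * pd (u.1 β) α x)
      + (1 / 2) * (∫ x in Ω, T₀ α β x * pd u.2 α x * pd u.2 β x) := by
    intro α β
    have hIa := hint α β _ (hpdc (u.1 α) (hu1 α) β)
    have hIb := hint α β _ (hpdc (u.1 β) (hu1 β) α)
    have hIc : Integrable (fun x => T₀ α β x * pd u.2 α x * pd u.2 β x) (volume.restrict Ω) := by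
      simpa [mul_assoc] using hint α β _ ((hpdc u.2 hw1 α).mul (hpdc u.2 hw1 β))
    have hfun : (fun x => T₀ α β x * gam u α β x)
        = (fun x => (1 / 2) * (T₀ α β x * pd (u.1 α) β x)
          + ((1 / 2) * (T₀ α β x * pd (u.1 β) α x)
          + (1 / 2) * (T₀ α β x * pd u.2 α x * pd u.2 β x))) := by
      funext x; unfold gam; ring
    have h1 : Integrable (fun x => (1 / 2 : ℝ) * (T₀ α β x * pd (u.1 α) β x))
        (volume.restrict Ω) := hIa.const_mul _
    have h2 : Integrable (fun x => (1 / 2 : ℝ) * (T₀ α β x * pd (u.1 β) α x))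
        (volume.restrict Ω) := hIb.const_mul _
    have h3 : Integrable (fun x => (1 / 2 : ℝ) * (T₀ α β x * pd u.2 α x * pd u.2 β x))
        (volume.restrict Ω) := hIc.const_mul _
    have h23 : Integrable (fun x => (1 / 2 : ℝ) * (T₀ α β x * pd (u.1 β) α x)
        + (1 / 2 : ℝ) * (T₀ α β x * pd u.2 α x * pd u.2 β x)) (volume.restrict Ω) := h2.add h3
    rw [hfun, integral_add h1 h23, integral_add h2 h3,
      integral_const_mul, integral_const_mul, integral_const_mul]
    ring
  -- swap the symmetric part
  have hswap : (∑ α, ∑ β, ∫ x in Ω, T₀ α β x * pd (u.1 β) α x)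
      = ∑ α, ∑ β, ∫ x in Ω, T₀ α β x * pd (u.1 α) β x := by
    rw [Finset.sum_comm]
    refine Finset.sum_congr rfl fun α _ => Finset.sum_congr rfl fun β _ => ?_
    congr 1
    funext x
    rw [hT₀sym]
  have key := hT₀eq u.1 hu1 hbc1
  have hsum : (∑ α, ∑ β, ∫ x in Ω, T₀ α β x * gam u α β x)
      = (∑ α, ∫ x in Ω, P α x * u.1 α x) + (∑ α, ∫ x in Γt, Pt α x * u.1 α x ∂σ)
        + (1 / 2) * ∑ α, ∑ β, ∫ x in Ω, T₀ α β x * pd u.2 α x * pd u.2 β x := by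
    simp only [split, Finset.sum_add_distrib, ← Finset.mul_sum]
    rw [hswap]
    linear_combination key
  have hP3c : (∫ x in Ω, u.2 x * P3 x) = ∫ x in Ω, P3 x * u.2 x := by
    simp [mul_comm]
  rw [hJ, hJ₁, hsum, hP3c]
  ring
end
end
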